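/- Let M = [[D,0],[0,D]] with D = diag(d_1,…,d_n), d_i > 0 and all d_i distinct. If U ∈ M_{2n}(ℝ) is orthogonal, symplectic, and satisfies U M Uᵀ = M, then U has the block form [[C, −S],[S, C]] with C = diag(cos θ_1,…,cos θ_n) and S = diag(sin θ_1,…,sin θ_n) for some angles θ_1,…,θ_n. -/

import Mathlib

noncomputable section
open Matrix Polynomial

/-- The canonical symplectic matrix `J = [[0, I], [-I, 0]]`. -/
def Jmat (n : ℕ) : Matrix (Fin n ⊕ Fin n) (Fin n ⊕ Fin n) ℝ :=
  Matrix.fromBlocks 0 1 (-1) 0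

/-- Existence of an angle from a point on the unit circle. -/
lemma exists_angle (a c : ℝ) (h : a ^ 2 + c ^ 2 = 1) :
    ∃ θ : ℝ, Real.cos θ = a ∧ Real.sin θ = c := by
  have hz : (⟨a, c⟩ : ℂ) ≠ 0 := by
    intro h0
    rw [Complex.ext_iff] at h0
    simp at h0
    rw [h0.1, h0.2] at h
    norm_num at h
  have habs : ‖(⟨a, c⟩ : ℂ)‖ = 1 := by
    rw [Complex.norm_def, Complex.normSq_mk]
    rw [show a * a + c * c = 1 by nlinarith]
    exact Real.sqrt_one
  refine ⟨Complex.arg ⟨a, c⟩, ?_, ?_⟩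
  · rw [Complex.cos_arg hz, habs]; simp
  · rw [Complex.sin_arg, habs]; simp

/-- If `U` is orthogonal, symplectic and commutes with `M = [[D,0],[0,D]]` (in the sense
`U M Uᵀ = M`) where `D` has distinct positive diagonal entries, then `U` is a block
rotation `[[C,-S],[S,C]]` with `C = diag(cos θᵢ)`, `S = diag(sin θᵢ)`. -/
theorem unitary_commuting_with_distinct_diag_is_torus {n : ℕ}
    (d : Fin n → ℝ) (hd0 : ∀ i, 0 < d i) (hinj : Function.Injective d)
    (U : Matrix (Fin n ⊕ Fin n) (Fin n ⊕ Fin n) ℝ)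
    (horth : Uᵀ * U = 1)
    (hsymp : Uᵀ * Jmat n * U = Jmat n)
    (hM : U * Matrix.fromBlocks (Matrix.diagonal d) 0 0 (Matrix.diagonal d) * Uᵀ
        = Matrix.fromBlocks (Matrix.diagonal d) 0 0 (Matrix.diagonal d)) :
    ∃ θ : Fin n → ℝ,
      U = Matrix.fromBlocks
        (Matrix.diagonal fun i => Real.cos (θ i))
        (-(Matrix.diagonal fun i => Real.sin (θ i)))
        (Matrix.diagonal fun i => Real.sin (θ i))
        (Matrix.diagonal fun i => Real.cos (θ i)) := by
  classical
  set dd : Fin n ⊕ Fin n → ℝ := Sum.elim d d with hdd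
  have hMdiag : Matrix.fromBlocks (Matrix.diagonal d) 0 0 (Matrix.diagonal d)
      = Matrix.diagonal dd := by
    rw [hdd, ← Matrix.fromBlocks_diagonal]
  rw [hMdiag] at hM
  -- U commutes with the diagonal matrix
  have hcomm : U * Matrix.diagonal dd = Matrix.diagonal dd * U := by
    have h1 : (U * Matrix.diagonal dd * Uᵀ) * U = U * Matrix.diagonal dd := by
      rw [Matrix.mul_assoc, horth, Matrix.mul_one]
    rw [← h1, hM]
  -- entries of U vanish when the diagonal entries differ
  have hzero : ∀ x y, dd x ≠ dd y → U x y = 0 := by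
    intro x y hne
    have h := congrFun (congrFun hcomm x) y
    rw [Matrix.mul_diagonal, Matrix.diagonal_mul] at h
    by_contra h0
    exact hne (mul_left_cancel₀ h0 (h.trans (mul_comm (dd x) (U x y)))).symm
  have hll : ∀ i j : Fin n, i ≠ j → U (.inl i) (.inl j) = 0 := fun i j h =>
    hzero _ _ (fun he => h (hinj he))
  have hlr : ∀ i j : Fin n, i ≠ j → U (.inl i) (.inr j) = 0 := fun i j h =>
    hzero _ _ (fun he => h (hinj he))
  have hrl : ∀ i j : Fin n, i ≠ j → U (.inr i) (.inl j) = 0 := fun i j h =>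
    hzero _ _ (fun he => h (hinj he))
  have hrr : ∀ i j : Fin n, i ≠ j → U (.inr i) (.inr j) = 0 := fun i j h =>
    hzero _ _ (fun he => h (hinj he))
  -- orthogonality: column (inl i) has unit norm
  have horth1 : ∀ i, U (.inl i) (.inl i) ^ 2 + U (.inr i) (.inl i) ^ 2 = 1 := by
    intro i
    have h := congrFun (congrFun horth (.inl i)) (.inl i)
    rw [Matrix.mul_apply, Fintype.sum_sum_type] at h
    simp only [Matrix.transpose_apply, Matrix.one_apply_eq] at h
    rw [Fintype.sum_eq_single i (fun j hj => by rw [hll j i hj]; ring),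
        Fintype.sum_eq_single i (fun j hj => by rw [hrl j i hj]; ring)] at h
    nlinarith [h]
  -- orthogonality: columns (inl i) and (inr i) are orthogonal
  have horth2 : ∀ i, U (.inl i) (.inl i) * U (.inl i) (.inr i)
      + U (.inr i) (.inl i) * U (.inr i) (.inr i) = 0 := by
    intro i
    have h := congrFun (congrFun horth (.inl i)) (.inr i)
    rw [Matrix.mul_apply, Fintype.sum_sum_type] at h
    simp only [Matrix.transpose_apply] at h
    rw [Fintype.sum_eq_single i (fun j hj => by rw [hll j i hj]; ring),
        Fintype.sum_eq_single i (fun j hj => by rw [hrl j i hj]; ring)] at h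
    rw [Matrix.one_apply_ne (by simp)] at h
    exact h
  -- symplectic condition entrywise
  have hJU1 : ∀ (j : Fin n) y, (Jmat n * U) (.inl j) y = U (.inr j) y := by
    intro j y
    rw [Matrix.mul_apply, Fintype.sum_sum_type]
    simp [Jmat, Matrix.one_apply]
  have hJU2 : ∀ (j : Fin n) y, (Jmat n * U) (.inr j) y = -U (.inl j) y := by
    intro j y
    rw [Matrix.mul_apply, Fintype.sum_sum_type]
    simp [Jmat, Matrix.one_apply]
  have hsymp' : Uᵀ * (Jmat n * U) = Jmat n := by rw [← Matrix.mul_assoc]; exact hsymp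
  have hsym : ∀ i, U (.inl i) (.inl i) * U (.inr i) (.inr i)
      - U (.inr i) (.inl i) * U (.inl i) (.inr i) = 1 := by
    intro i
    have h := congrFun (congrFun hsymp' (.inl i)) (.inr i)
    rw [Matrix.mul_apply, Fintype.sum_sum_type] at h
    simp only [Matrix.transpose_apply, hJU1, hJU2] at h
    rw [Fintype.sum_eq_single i (fun j hj => by rw [hll j i hj]; ring),
        Fintype.sum_eq_single i (fun j hj => by rw [hrl j i hj]; ring)] at h
    have hJ : (Jmat n) (Sum.inl i) (Sum.inr i) = 1 := by
      simp [Jmat, Matrix.one_apply]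
    rw [hJ] at h
    nlinarith [h]
  -- deduce the block structure entries
  have hb : ∀ i, U (.inl i) (.inr i) = -U (.inr i) (.inl i) := by
    intro i
    have h1 := horth1 i
    have h2 := horth2 i
    have h3 := hsym i
    linear_combination (-(U (.inl i) (.inr i))) * h1 + U (.inl i) (.inl i) * h2
      - U (.inr i) (.inl i) * h3
  have he : ∀ i, U (.inr i) (.inr i) = U (.inl i) (.inl i) := by
    intro i
    have h1 := horth1 i
    have h2 := horth2 i
    have h3 := hsym i
    linear_combination (-(U (.inr i) (.inr i))) * h1 + U (.inr i) (.inl i) * h2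
      + U (.inl i) (.inl i) * h3
  -- choose angles
  have hθ : ∀ i, ∃ θ : ℝ, Real.cos θ = U (.inl i) (.inl i) ∧ Real.sin θ = U (.inr i) (.inl i) :=
    fun i => exists_angle _ _ (horth1 i)
  choose θ hθc hθs using hθ
  refine ⟨θ, ?_⟩
  ext x y
  rcases x with i | i <;> rcases y with j | j
  · rw [Matrix.fromBlocks_apply₁₁]
    by_cases h : i = j
    · subst h; rw [Matrix.diagonal_apply_eq, hθc]
    · rw [Matrix.diagonal_apply_ne _ h, hll i j h]
  · rw [Matrix.fromBlocks_apply₁₂]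
    by_cases h : i = j
    · subst h
      simp only [Matrix.neg_apply, Matrix.diagonal_apply_eq]
      rw [hb i, hθs]
    · simp only [Matrix.neg_apply]
      rw [Matrix.diagonal_apply_ne _ h, hlr i j h, neg_zero]
  · rw [Matrix.fromBlocks_apply₂₁]
    by_cases h : i = j
    · subst h; rw [Matrix.diagonal_apply_eq, hθs]
    · rw [Matrix.diagonal_apply_ne _ h, hrl i j h]
  · rw [Matrix.fromBlocks_apply₂₂]
    by_cases h : i = j
    · subst h; rw [Matrix.diagonal_apply_eq, he i, hθc]
    · rw [Matrix.diagonal_apply_ne _ h, hrr i j h]
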